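/- arXiv:2409.10513 — 4 statements merged into one kernel-verified Lean document; each statement's English description precedes it below -/
import Mathlib

section
/- Let μ be a probability measure on a finite (or measurable) space Ω and let 𝔭 : Ω → [0,∞) be a probability density with respect to μ (i.e. ∫ 𝔭 dμ = 1). Then for every function 𝔣 : Ω → ℝ and every κ > 0, ∫ 𝔣·𝔭 dμ ≤ κ⁻¹·∫ 𝔭·log 𝔭 dμ + κ⁻¹·log ∫ e^{κ𝔣} dμ. -/
lemma young_ineq (x y : ℝ) (hx : 0 ≤ x) :
    x * y ≤ x * Real.log x - x + Real.exp y := by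
  rcases hx.eq_or_lt with h | h
  · subst h
    simp
    positivity
  · have h1 := Real.add_one_le_exp (y - Real.log x)
    have h2 : x * (y - Real.log x + 1) ≤ x * Real.exp (y - Real.log x) :=
      mul_le_mul_of_nonneg_left h1 h.le
    have h3 : x * Real.exp (y - Real.log x) = Real.exp y := by
      rw [Real.exp_sub, Real.exp_log h]
      field_simp
    nlinarith

/-- Entropy inequality: if `μ` is a probability measure on a finite space `Ω` and `p` a
probability density with respect to `μ`, then for every `f : Ω → ℝ` and `κ > 0`,
`∫ f p dμ ≤ κ⁻¹ ∫ p log p dμ + κ⁻¹ log ∫ e^{κ f} dμ`. -/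
theorem stmt_4 {Ω : Type*} [Fintype Ω] (μ p f : Ω → ℝ) (κ : ℝ)
    (hμ0 : ∀ ω, 0 ≤ μ ω) (hμ1 : ∑ ω, μ ω = 1)
    (hp0 : ∀ ω, 0 ≤ p ω) (hp1 : ∑ ω, p ω * μ ω = 1) (hκ : 0 < κ) :
    ∑ ω, f ω * p ω * μ ω ≤
      κ⁻¹ * ∑ ω, p ω * Real.log (p ω) * μ ω +
        κ⁻¹ * Real.log (∑ ω, Real.exp (κ * f ω) * μ ω) := by
  set Z := ∑ ω, Real.exp (κ * f ω) * μ ω with hZdef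
  have hμpos : ∃ ω, 0 < μ ω := by
    by_contra h
    push_neg at h
    have hz : ∀ ω ∈ Finset.univ, μ ω = 0 := fun ω _ => le_antisymm (h ω) (hμ0 ω)
    rw [Finset.sum_eq_zero hz] at hμ1
    norm_num at hμ1
  obtain ⟨ω0, hω0⟩ := hμpos
  have hZ : 0 < Z :=
    Finset.sum_pos' (fun ω _ => mul_nonneg (Real.exp_pos _).le (hμ0 ω)) ⟨ω0, Finset.mem_univ _, by positivity⟩
  have key : ∀ ω, p ω * (κ * f ω - Real.log Z) * μ ω ≤
      (p ω * Real.log (p ω) - p ω + Real.exp (κ * f ω) / Z) * μ ω := by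
    intro ω
    apply mul_le_mul_of_nonneg_right _ (hμ0 ω)
    have h := young_ineq (p ω) (κ * f ω - Real.log Z) (hp0 ω)
    rwa [Real.exp_sub, Real.exp_log hZ] at h
  have hsum : ∑ ω, p ω * (κ * f ω - Real.log Z) * μ ω ≤
      ∑ ω, (p ω * Real.log (p ω) - p ω + Real.exp (κ * f ω) / Z) * μ ω :=
    Finset.sum_le_sum (fun ω _ => key ω)
  have hLHS : ∑ ω, p ω * (κ * f ω - Real.log Z) * μ ω
      = κ * ∑ ω, f ω * p ω * μ ω - Real.log Z * ∑ ω, p ω * μ ω := by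
    rw [Finset.mul_sum, Finset.mul_sum, ← Finset.sum_sub_distrib]
    exact Finset.sum_congr rfl fun ω _ => by ring
  have hRHS : ∑ ω, (p ω * Real.log (p ω) - p ω + Real.exp (κ * f ω) / Z) * μ ω
      = ∑ ω, p ω * Real.log (p ω) * μ ω - ∑ ω, p ω * μ ω + Z⁻¹ * Z := by
    have hterm : ∀ ω, (p ω * Real.log (p ω) - p ω + Real.exp (κ * f ω) / Z) * μ ω
        = (p ω * Real.log (p ω) * μ ω - p ω * μ ω) + Z⁻¹ * (Real.exp (κ * f ω) * μ ω) := by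
      intro ω
      rw [div_eq_mul_inv]
      ring
    simp_rw [hterm]
    rw [Finset.sum_add_distrib, Finset.sum_sub_distrib, ← Finset.mul_sum, ← hZdef]
  rw [hLHS, hRHS, hp1, inv_mul_cancel₀ hZ.ne'] at hsum
  have h2 : κ * (∑ ω, f ω * p ω * μ ω) ≤
      κ * (κ⁻¹ * ∑ ω, p ω * Real.log (p ω) * μ ω + κ⁻¹ * Real.log Z) := by
    rw [mul_add, ← mul_assoc, ← mul_assoc, mul_inv_cancel₀ hκ.ne', one_mul, one_mul]
    linarith
  exact le_of_mul_le_mul_left h2 hκ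
end

section
/- Let {𝔣_i}_{i=1}^n be real-valued functions on {−1,+1}^L (for a finite set L) such that: (a) each 𝔣_i depends only on coordinates in a subset I_i ⊆ L, with the I_i pairwise disjoint; (b) each |𝔣_i| ≤ M for some constant M; and (c) for every admissible density σ, the conditional expectation of 𝔣_i given the total sum ∑_{x∈L} η_x vanishes, where η is uniform on the set {η : ∑_{x∈L} η_x = σ·|L|}. Then the partial sums S_m = 𝔣_1 + ⋯ + 𝔣_m form a martingale with respect to the filtration F_m generated by the coordinates in I_1 ∪ ⋯ ∪ I_m, under the uniform measure on {η ∈ {−1,+1}^L : ∑_{x∈L} η_x = σ·|L|}. -/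
open MeasureTheory Finset

namespace Stmt6Aux

variable {K : Type*} [Fintype K] [DecidableEq K]

def spinF (ξ : K → Bool) : ℤ := ∑ x : K, (if ξ x then (1:ℤ) else -1)

lemma spinF_le (ξ : K → Bool) : spinF ξ ≤ Fintype.card K := by
  unfold spinF
  calc ∑ x : K, (if ξ x then (1:ℤ) else -1) ≤ ∑ _x : K, (1:ℤ) :=
        Finset.sum_le_sum (fun x _ => by split <;> omega)
    _ = Fintype.card K := by simp

lemma neg_card_le_spinF (ξ : K → Bool) : -(Fintype.card K : ℤ) ≤ spinF ξ := by
  unfold spinF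
  calc -(Fintype.card K : ℤ) = ∑ _x : K, (-1:ℤ) := by simp
    _ ≤ _ := Finset.sum_le_sum (fun x _ => by split <;> omega)

lemma spinF_eq_card_iff (ξ : K → Bool) :
    spinF ξ = Fintype.card K ↔ ξ = fun _ => true := by
  constructor
  · intro h
    have h0 : ∑ x : K, ((1:ℤ) - (if ξ x then 1 else -1)) = 0 := by
      rw [Finset.sum_sub_distrib]
      have : ∑ x : K, (if ξ x then (1:ℤ) else -1) = spinF ξ := rfl
      rw [this, h]
      simp
    rw [Finset.sum_eq_zero_iff_of_nonneg (fun x _ => by split <;> omega)] at h0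
    funext x
    have := h0 x (mem_univ x)
    by_contra hx
    simp only [Bool.not_eq_true] at hx
    rw [hx] at this
    norm_num at this
  · intro h; subst h; simp [spinF]

lemma filter_spin_card_eq_one :
    ((univ : Finset (K → Bool)).filter (fun ξ => spinF ξ = Fintype.card K)).card = 1 := by
  rw [Finset.card_eq_one]
  refine ⟨fun _ => true, ?_⟩
  ext ξ
  simp [Finset.mem_filter, spinF_eq_card_iff]

lemma filter_spin_card_eq_zero {r : ℤ} (hr : (Fintype.card K : ℤ) < r) :
    ((univ : Finset (K → Bool)).filter (fun ξ => spinF ξ = r)).card = 0 := by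
  rw [Finset.card_eq_zero]
  ext ξ
  simp only [Finset.mem_filter, mem_univ, true_and, Finset.notMem_empty, iff_false]
  intro h
  have := spinF_le ξ
  omega

lemma inv_lemma {K₁ K₂ : Type*} [Fintype K₁] [Fintype K₂] [DecidableEq K₁] [DecidableEq K₂]
    (g : (K₁ → Bool) → ℝ)
    (h : ∀ s' : ℤ, ∑ ξ : K₁ → Bool, ∑ τ : K₂ → Bool,
        (if spinF ξ + spinF τ = s' then g ξ else 0) = 0)
    (t : ℤ) : ∑ ξ : K₁ → Bool, (if spinF ξ = t then g ξ else 0) = 0 := by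
  set N : ℤ → ℝ := fun r => (((univ : Finset (K₂ → Bool)).filter (fun τ => spinF τ = r)).card : ℝ)
    with hN
  have hNone : N (Fintype.card K₂) = 1 := by
    rw [hN]; norm_num [filter_spin_card_eq_one]
  have hNzero : ∀ r : ℤ, (Fintype.card K₂ : ℤ) < r → N r = 0 := by
    intro r hr; rw [hN]; norm_num [filter_spin_card_eq_zero hr]
  have key : ∀ s' : ℤ, ∑ ξ : K₁ → Bool, N (s' - spinF ξ) * g ξ = 0 := by
    intro s'
    have := h s'
    rw [← this]
    apply Finset.sum_congr rfl
    intro ξ _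
    have heval : (∑ τ : K₂ → Bool, if spinF ξ + spinF τ = s' then g ξ else 0)
        = ∑ _τ ∈ (univ : Finset (K₂ → Bool)).filter (fun τ => spinF τ = s' - spinF ξ), g ξ := by
      rw [Finset.sum_filter]
      exact Finset.sum_congr rfl fun τ _ => if_congr (by omega) rfl rfl
    rw [heval, Finset.sum_const, nsmul_eq_mul]
  suffices H : ∀ d : ℕ, ∀ t : ℤ, (Fintype.card K₁ : ℤ) - t ≤ d →
      ∑ ξ : K₁ → Bool, (if spinF ξ = t then g ξ else 0) = 0 by
    exact H ((Fintype.card K₁ : ℤ) - t).toNat t (Int.self_le_toNat _)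
  intro d
  induction d using Nat.strong_induction_on with
  | _ d IH =>
    intro t ht
    by_cases htlow : t < -(Fintype.card K₁ : ℤ)
    · apply Finset.sum_eq_zero
      intro ξ _
      have := neg_card_le_spinF ξ
      split <;> [omega; rfl]
    by_cases hthigh : (Fintype.card K₁ : ℤ) < t
    · apply Finset.sum_eq_zero
      intro ξ _
      have := spinF_le ξ
      split <;> [omega; rfl]
    push_neg at htlow hthigh
    have hk := key (t + Fintype.card K₂)
    have hfib : ∑ ξ : K₁ → Bool, N (t + Fintype.card K₂ - spinF ξ) * g ξ
        = ∑ u ∈ Finset.Icc (-(Fintype.card K₁ : ℤ)) (Fintype.card K₁),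
            ∑ ξ ∈ (univ : Finset (K₁ → Bool)).filter (fun ξ => spinF ξ = u),
              N (t + Fintype.card K₂ - spinF ξ) * g ξ := by
      rw [Finset.sum_fiberwise_of_maps_to
        (fun ξ _ => Finset.mem_Icc.mpr ⟨neg_card_le_spinF ξ, spinF_le ξ⟩)]
    rw [hfib] at hk
    have hinner : ∀ u : ℤ,
        ∑ ξ ∈ (univ : Finset (K₁ → Bool)).filter (fun ξ => spinF ξ = u),
            N (t + Fintype.card K₂ - spinF ξ) * g ξ
        = N (t + Fintype.card K₂ - u) * ∑ ξ : K₁ → Bool, (if spinF ξ = u then g ξ else 0) := by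
      intro u
      rw [← Finset.sum_filter, Finset.mul_sum]
      apply Finset.sum_congr rfl
      intro ξ hξ
      rw [(Finset.mem_filter.mp hξ).2]
    have hsingle : ∑ u ∈ Finset.Icc (-(Fintype.card K₁ : ℤ)) (Fintype.card K₁),
        ∑ ξ ∈ (univ : Finset (K₁ → Bool)).filter (fun ξ => spinF ξ = u),
            N (t + Fintype.card K₂ - spinF ξ) * g ξ
        = ∑ ξ : K₁ → Bool, (if spinF ξ = t then g ξ else 0) := by
      rw [Finset.sum_eq_single_of_mem t (Finset.mem_Icc.mpr ⟨htlow, hthigh⟩)]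
      · rw [hinner t]
        simp only [add_sub_cancel_left, hNone, one_mul]
      · intro u hu hut
        rw [hinner u]
        rcases lt_or_gt_of_ne hut with hlt | hgt
        · rw [hNzero _ (by omega), zero_mul]
        · have hucard : u ≤ (Fintype.card K₁ : ℤ) := (Finset.mem_Icc.mp hu).2
          have hd : ((Fintype.card K₁ : ℤ) - u).toNat < d := by omega
          rw [IH _ hd u (Int.self_le_toNat _), mul_zero]
    rw [hsingle] at hk
    exact hk


lemma fin_lemma {L : Type*} [Fintype L] [DecidableEq L]
    (T : Finset L) (g : (L → Bool) → ℝ)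
    (hg : ∀ η η' : L → Bool, (∀ x ∈ T, η x = η' x) → g η = g η')
    (P : Set (L → Bool)) [DecidablePred (· ∈ P)]
    (hP : ∀ η η' : L → Bool, (∀ x ∉ T, η x = η' x) → (η ∈ P ↔ η' ∈ P))
    (hm : ∀ s' : ℤ, ∑ η ∈ (univ : Finset (L → Bool)).filter (fun η => spinF η = s'), g η = 0)
    (s : ℤ) :
    ∑ η ∈ (univ : Finset (L → Bool)).filter (fun η => spinF η = s ∧ η ∈ P), g η = 0 := by
  classical
  set e := Equiv.piEquivPiSubtypeProd (fun x : L => x ∈ T) (fun _ => Bool) with he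
  set ext : ({x : L // x ∈ T} → Bool) → ({x : L // ¬ x ∈ T} → Bool) → (L → Bool) :=
    fun ξ τ => e.symm (ξ, τ) with hext
  have hext_mem : ∀ ξ τ (x : L) (hx : x ∈ T), ext ξ τ x = ξ ⟨x, hx⟩ := by
    intro ξ τ x hx
    simp [hext, he, Equiv.piEquivPiSubtypeProd, hx]
  have hext_not : ∀ ξ τ (x : L) (hx : ¬ x ∈ T), ext ξ τ x = τ ⟨x, hx⟩ := by
    intro ξ τ x hx
    simp [hext, he, Equiv.piEquivPiSubtypeProd, hx]
  have hsplit : ∀ η : L → Bool, spinF η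
      = (∑ x : {x : L // x ∈ T}, if η x.1 then (1:ℤ) else -1)
        + ∑ x : {x : L // ¬ x ∈ T}, if η x.1 then (1:ℤ) else -1 := by
    intro η
    unfold spinF
    rw [← Finset.sum_add_sum_compl T (fun x : L => if η x then (1:ℤ) else -1)]
    congr 1
    · exact Finset.sum_subtype T (fun x => Iff.rfl) _
    · exact Finset.sum_subtype Tᶜ (fun x => by simp) _
  have hspin : ∀ ξ τ, spinF (ext ξ τ) = spinF ξ + spinF τ := by
    intro ξ τ
    rw [hsplit (ext ξ τ)]
    congr 1
    · exact Finset.sum_congr rfl fun x _ => by rw [hext_mem ξ τ x.1 x.2]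
    · exact Finset.sum_congr rfl fun x _ => by rw [hext_not ξ τ x.1 x.2]
  set gg : ({x : L // x ∈ T} → Bool) → ℝ := fun ξ => g (ext ξ (fun _ => true)) with hgg
  have hgval : ∀ ξ τ, g (ext ξ τ) = gg ξ := by
    intro ξ τ
    apply hg
    intro x hx
    rw [hext_mem ξ τ x hx, hext_mem ξ _ x hx]
  have hPval : ∀ ξ ξ' τ, ext ξ τ ∈ P ↔ ext ξ' τ ∈ P := by
    intro ξ ξ' τ
    apply hP
    intro x hx
    rw [hext_not ξ τ x hx, hext_not ξ' τ x hx]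
  have hinv : ∀ t : ℤ, ∑ ξ : {x : L // x ∈ T} → Bool, (if spinF ξ = t then gg ξ else 0) = 0 := by
    have hkey : ∀ s' : ℤ, ∑ ξ : {x : L // x ∈ T} → Bool, ∑ τ : {x : L // ¬ x ∈ T} → Bool,
        (if spinF ξ + spinF τ = s' then gg ξ else 0) = 0 := ?_
    · exact inv_lemma gg hkey
    intro s'
    have h1 : (∑ ξ : {x : L // x ∈ T} → Bool, ∑ τ : {x : L // ¬ x ∈ T} → Bool,
        (if spinF ξ + spinF τ = s' then gg ξ else 0))
        = ∑ η : L → Bool, (if spinF η = s' then g η else 0) := by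
      rw [← Equiv.sum_comp e.symm (fun η => if spinF η = s' then g η else 0),
        Fintype.sum_prod_type]
      apply Finset.sum_congr rfl
      intro ξ _
      apply Finset.sum_congr rfl
      intro τ _
      rw [show (e.symm (ξ, τ) : L → Bool) = ext ξ τ from rfl, hspin ξ τ, hgval ξ τ]
    rw [h1, ← Finset.sum_filter]
    exact hm s'
  -- main computation
  rw [Finset.sum_filter]
  have h1 : ∑ η : L → Bool, (if spinF η = s ∧ η ∈ P then g η else 0)
      = ∑ p : ({x : L // x ∈ T} → Bool) × ({x : L // ¬ x ∈ T} → Bool),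
        (if spinF (e.symm p) = s ∧ (e.symm p : L → Bool) ∈ P then g (e.symm p) else 0) :=
    (Equiv.sum_comp e.symm (fun η => if spinF η = s ∧ η ∈ P then g η else 0)).symm
  rw [h1, Fintype.sum_prod_type_right]
  apply Finset.sum_eq_zero
  intro τ _
  by_cases hPτ : ext (fun _ => true) τ ∈ P
  · have : ∀ ξ, (if spinF (e.symm (ξ, τ)) = s ∧ (e.symm (ξ, τ) : L → Bool) ∈ P
        then g (e.symm (ξ, τ)) else 0) = (if spinF ξ = s - spinF τ then gg ξ else 0) := by
      intro ξ
      rw [show (e.symm (ξ, τ) : L → Bool) = ext ξ τ from rfl]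
      rw [hgval ξ τ]
      refine if_congr ?_ rfl rfl
      rw [hspin ξ τ]
      have := (hPval ξ (fun _ => true) τ).trans (iff_of_true hPτ hPτ)
      constructor
      · rintro ⟨h4, _⟩; omega
      · intro h4
        refine ⟨by omega, ?_⟩
        exact (hPval ξ (fun _ => true) τ).mpr hPτ
    rw [Finset.sum_congr rfl fun ξ _ => this ξ]
    exact hinv (s - spinF τ)
  · apply Finset.sum_eq_zero
    intro ξ _
    rw [if_neg]
    rintro ⟨_, hmem⟩
    exact hPτ ((hPval ξ (fun _ => true) τ).mp hmem)


lemma setIntegral_uniform {Ω : Type*} [Fintype Ω] [MeasurableSpace Ω]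
    [MeasurableSingletonClass Ω] [DecidableEq Ω]
    (A : Finset Ω) (hAne : A.Nonempty) (F : Ω → ℝ) (sset : Set Ω) [DecidablePred (· ∈ sset)] :
    ∫ x in sset, F x ∂((PMF.uniformOfFinset A hAne).toMeasure)
      = (A.card : ℝ)⁻¹ * ∑ η ∈ A.filter (· ∈ sset), F η := by
  rw [← MeasureTheory.integral_indicator MeasurableSet.of_discrete]
  rw [PMF.integral_eq_sum]
  have hterm : ∀ a : Ω, ((PMF.uniformOfFinset A hAne) a).toReal • (sset.indicator F a)
      = (if a ∈ A ∧ a ∈ sset then (A.card : ℝ)⁻¹ * F a else 0) := by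
    intro a
    rw [PMF.uniformOfFinset_apply]
    by_cases h1 : a ∈ A <;> by_cases h2 : a ∈ sset <;>
      simp [h1, h2, Set.indicator, ENNReal.toReal_inv, smul_eq_mul]
  rw [Finset.sum_congr rfl fun a _ => hterm a, ← Finset.sum_filter, Finset.mul_sum]
  apply Finset.sum_congr
  · ext a; simp [Finset.mem_filter]
  · intros; rfl

end Stmt6Aux

open MeasureTheory

/-- Martingale property of partial sums under the canonical ensemble.  Configurations are
`η : L → Bool` (with `true ↦ +1`, `false ↦ -1`).  The functions `f i` (for `i < n`) have
pairwise disjoint supports `I i`, are bounded by `M`, and have zero mean on every level set of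
the total spin.  Then the partial sums `S m = ∑_{i < min m n} f i` form a martingale, under
the uniform measure on the canonical ensemble `A = {η | ∑ η_x = s}`, with respect to the
filtration generated by the coordinates in `I 0 ∪ ⋯ ∪ I (m-1)`. -/
theorem stmt_6 {L : Type*} [Fintype L] [DecidableEq L]
    (n : ℕ) (f : ℕ → (L → Bool) → ℝ) (I : ℕ → Finset L) (M : ℝ) (s : ℤ)
    (hdisj : ∀ i j, i < n → j < n → i ≠ j → Disjoint (I i) (I j))
    (hdep : ∀ i, i < n → ∀ η η' : L → Bool,
      (∀ x ∈ I i, η x = η' x) → f i η = f i η')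
    (hbdd : ∀ i, i < n → ∀ η, |f i η| ≤ M)
    (hmean : ∀ i, i < n → ∀ s' : ℤ,
      ∑ η ∈ Finset.univ.filter
          (fun η : L → Bool => (∑ x : L, (if η x then (1 : ℤ) else -1)) = s'), f i η = 0)
    (A : Finset (L → Bool))
    (hA : A = Finset.univ.filter
      (fun η : L → Bool => (∑ x : L, (if η x then (1 : ℤ) else -1)) = s))
    (hAne : A.Nonempty)
    (ℱ : Filtration ℕ (inferInstance : MeasurableSpace (L → Bool)))
    (hℱ : ∀ m : ℕ, ℱ m = MeasurableSpace.comap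
      (fun (η : L → Bool) (x : {x : L // x ∈ (Finset.range m).biUnion I}) => η x.1) ⊤) :
    Martingale (fun m η => ∑ i ∈ Finset.range (min m n), f i η) ℱ
      ((PMF.uniformOfFinset A hAne).toMeasure) := by
  classical
  set μ := (PMF.uniformOfFinset A hAne).toMeasure with hμ
  have hadapted : ∀ m : ℕ, StronglyMeasurable[ℱ m]
      (fun η : L → Bool => ∑ i ∈ Finset.range (min m n), f i η) := by
    intro m
    set J := (Finset.range m).biUnion I with hJ
    set π : (L → Bool) → ({x : L // x ∈ J} → Bool) := fun η x => η x.1 with hπ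
    set g : ({x : L // x ∈ J} → Bool) → ℝ :=
      fun ζ => ∑ i ∈ Finset.range (min m n),
        f i (fun x => if h : x ∈ J then ζ ⟨x, h⟩ else true) with hg
    have hfact : (fun η : L → Bool => ∑ i ∈ Finset.range (min m n), f i η) = g ∘ π := by
      funext η
      apply Finset.sum_congr rfl
      intro i hi
      have hi' := Finset.mem_range.mp hi
      have hin : i < n := lt_of_lt_of_le hi' (min_le_right m n)
      apply hdep i hin
      intro x hx
      have hxJ : x ∈ J := Finset.mem_biUnion.mpr
        ⟨i, Finset.mem_range.mpr (lt_of_lt_of_le hi' (min_le_left m n)), hx⟩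
      simp [hπ, hxJ]
    rw [hfact, hℱ m]
    have hπm : @Measurable _ _ (MeasurableSpace.comap π ⊤) ⊤ π := fun t _ => ⟨t, trivial, rfl⟩
    have hgm : @Measurable _ _ ⊤ _ g := fun t _ => trivial
    exact (hgm.comp hπm).stronglyMeasurable
  refine ⟨fun m => hadapted m, ?_⟩
  intro i j hij
  refine (ae_eq_condExp_of_forall_setIntegral_eq (ℱ.le i) Integrable.of_finite
    (fun sset _ _ => Integrable.of_finite.integrableOn)
    (fun sset hsset _ => ?_) ((hadapted i).aestronglyMeasurable)).symm
  rw [hμ, Stmt6Aux.setIntegral_uniform A hAne _ sset, Stmt6Aux.setIntegral_uniform A hAne _ sset]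
  congr 1
  rw [Finset.sum_comm, Finset.sum_comm (t := Finset.range (min j n))]
  have hmin : min i n ≤ min j n := min_le_min hij le_rfl
  rw [Finset.range_eq_Ico, Finset.range_eq_Ico,
    ← Finset.sum_Ico_consecutive (fun k => ∑ η ∈ A.filter (· ∈ sset), f k η)
      (Nat.zero_le (min i n)) hmin]
  rw [left_eq_add]
  apply Finset.sum_eq_zero
  intro k hk
  obtain ⟨hk1, hk2⟩ := Finset.mem_Ico.mp hk
  have hkn : k < n := lt_of_lt_of_le hk2 (min_le_right j n)
  have hik : i ≤ k := by omega
  -- sset depends only on coordinates in (range i).biUnion I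
  rw [hℱ i] at hsset
  obtain ⟨u, -, hu⟩ := hsset
  have hPdep : ∀ η η' : L → Bool, (∀ x ∉ I k, η x = η' x) → (η ∈ sset ↔ η' ∈ sset) := by
    intro η η' hagree
    have heq : (fun x : {x : L // x ∈ (Finset.range i).biUnion I} => η x.1)
        = (fun x => η' x.1) := by
      funext x
      apply hagree
      intro hxk
      obtain ⟨k', hk', hxk'⟩ := Finset.mem_biUnion.mp x.2
      have hk'i : k' < i := Finset.mem_range.mp hk'
      exact absurd hxk (Finset.disjoint_left.mp
        (hdisj k' k (by omega) hkn (by omega)) hxk')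
    rw [← hu]
    simp only [Set.mem_preimage]
    rw [heq]
  have hAf : A.filter (· ∈ sset)
      = (Finset.univ : Finset (L → Bool)).filter
          (fun η => Stmt6Aux.spinF η = s ∧ η ∈ sset) := by
    ext η
    simp [hA, Finset.mem_filter, Finset.mem_filter_univ, Stmt6Aux.spinF, and_assoc]
    exact ⟨fun h => Finset.mem_filter.mpr ⟨Finset.mem_univ _, h⟩, fun h => (Finset.mem_filter.mp h).2⟩
  rw [hAf]
  refine Stmt6Aux.fin_lemma (I k) (f k) (hdep k hkn) sset hPdep (fun s' => ?_) s
  have hfilt : (Finset.univ : Finset (L → Bool)).filter (fun η => Stmt6Aux.spinF η = s')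
      = Finset.univ.filter
          (fun η : L → Bool => (∑ x : L, (if η x then (1 : ℤ) else -1)) = s') := by
    ext η
    simp [Finset.mem_filter, Finset.mem_filter_univ, Stmt6Aux.spinF]
    exact ⟨fun h => (Finset.mem_filter.mp h).2, fun h => Finset.mem_filter.mpr ⟨Finset.mem_univ _, h⟩⟩
  rw [hfilt]
  exact hmean k hkn s'
end

section
/- Let {𝔣_i}_{i=1}^n be as in the martingale lemma for the canonical ensemble (pairwise disjoint supports, uniformly bounded by M, vanishing conditional mean). Then there is a universal constant c > 0 such that for every K > 0, the canonical-ensemble probability that |n⁻¹ ∑_{i=1}^n 𝔣_i[η]| ≥ K·M·n^{−1/2} is at most 2·exp(−c·K²). -/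
open MeasureTheory

namespace Stmt7Aux

open Finset Real
set_option linter.unusedSectionVars false

variable {L : Type} [Fintype L] [DecidableEq L]


/-- total spin on a sub-box -/
def spinOn (B : Finset L) (η : L → Bool) : ℤ := ∑ x ∈ B, (if η x then 1 else -1)

lemma spinOn_le (B : Finset L) (η : L → Bool) : spinOn B η ≤ B.card := by
  calc spinOn B η ≤ ∑ _x ∈ B, (1 : ℤ) :=
        Finset.sum_le_sum (fun x _ => by split <;> omega)
  _ = B.card := by simp

lemma spinOn_lt (B : Finset L) (η : L → Bool) {x₀ : L} (hx₀ : x₀ ∈ B)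
    (hfalse : η x₀ = false) : spinOn B η < B.card := by
  have : spinOn B η < ∑ _x ∈ B, (1 : ℤ) := by
    refine Finset.sum_lt_sum (fun x _ => by split <;> omega) ⟨x₀, hx₀, by simp [hfalse]⟩
  simpa using this

lemma spinOn_univ_split (B : Finset L) (η : L → Bool) :
    spinOn Finset.univ η = spinOn B η + spinOn Bᶜ η :=
  (Finset.sum_add_sum_compl B _).symm

lemma spinOn_congr {B : Finset L} {η η' : L → Bool} (h : ∀ x ∈ B, η x = η' x) :
    spinOn B η = spinOn B η' := Finset.sum_congr rfl (fun x hx => by rw [h x hx])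

/-- configurations agreeing with `τ` outside `B` and with spin `t` on `B` -/
def Fib (B : Finset L) (τ : L → Bool) (t : ℤ) : Finset (L → Bool) :=
  Finset.univ.filter (fun η => (∀ x, x ∉ B → η x = τ x) ∧ spinOn B η = t)

lemma sum_Fib_eq (B : Finset L) (τ τ' : L → Bool) (t : ℤ) (φ : (L → Bool) → ℝ)
    (hdep : ∀ η η', (∀ x ∈ B, η x = η' x) → φ η = φ η') :
    ∑ η ∈ Fib B τ t, φ η = ∑ η ∈ Fib B τ' t, φ η := by
  refine Finset.sum_nbij' (i := fun η x => if x ∈ B then η x else τ' x)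
    (j := fun η x => if x ∈ B then η x else τ x) ?_ ?_ ?_ ?_ ?_
  · intro η hη
    simp only [Fib, Finset.mem_filter, Finset.mem_univ, true_and] at hη ⊢
    refine ⟨fun x hx => if_neg hx, ?_⟩
    rw [spinOn_congr (fun x hx => if_pos hx)]
    exact hη.2
  · intro η hη
    simp only [Fib, Finset.mem_filter, Finset.mem_univ, true_and] at hη ⊢
    refine ⟨fun x hx => if_neg hx, ?_⟩
    rw [spinOn_congr (fun x hx => if_pos hx)]
    exact hη.2
  · intro η hη
    simp only [Fib, Finset.mem_filter, Finset.mem_univ, true_and] at hη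
    funext x
    by_cases hx : x ∈ B
    · simp [hx]
    · simp [hx, hη.1 x hx]
  · intro η hη
    simp only [Fib, Finset.mem_filter, Finset.mem_univ, true_and] at hη
    funext x
    by_cases hx : x ∈ B
    · simp [hx]
    · simp [hx, hη.1 x hx]
  · intro η hη
    exact hdep _ _ (fun x hx => (if_pos hx).symm)


lemma condMean (B : Finset L) (φ : (L → Bool) → ℝ)
    (hdep : ∀ η η', (∀ x ∈ B, η x = η' x) → φ η = φ η')
    (hzero : ∀ s' : ℤ,
      ∑ η ∈ Finset.univ.filter (fun η => spinOn Finset.univ η = s'), φ η = 0)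
    (t : ℤ) (τ : L → Bool) : ∑ η ∈ Fib B τ t, φ η = 0 := by
  set G : ℤ → ℝ := fun t => ∑ η ∈ Fib B (fun _ => false) t, φ η with hGdef
  rw [sum_Fib_eq B τ (fun _ => false) t φ hdep]
  -- the set of "outside" configurations
  set T : Finset (L → Bool) := Finset.univ.filter (fun τ => ∀ x ∈ B, τ x = false) with hT
  -- Step A : splitting the level-set sums
  have hA : ∀ s' : ℤ, ∑ τ' ∈ T, G (s' - spinOn Bᶜ τ') = 0 := by
    intro s'
    have hfib := Finset.sum_fiberwise
      (Finset.univ.filter (fun η => spinOn Finset.univ η = s'))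
      (fun η => (fun x => if x ∈ B then false else η x)) φ
    rw [hzero s'] at hfib
    -- each fiber over τ' ∉ T is empty; over τ' ∈ T it equals the Fib-sum
    have hinner : ∀ τ' : L → Bool,
        ∑ η ∈ (Finset.univ.filter (fun η => spinOn Finset.univ η = s')).filter
            (fun η => (fun x => if x ∈ B then false else η x) = τ'), φ η
          = if τ' ∈ T then G (s' - spinOn Bᶜ τ') else 0 := by
      intro τ'
      by_cases hτ' : τ' ∈ T
      · rw [if_pos hτ']
        rw [hT, Finset.mem_filter] at hτ'
        have hτ'B : ∀ x ∈ B, τ' x = false := hτ'.2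
        have hset : (Finset.univ.filter (fun η => spinOn Finset.univ η = s')).filter
            (fun η => (fun x => if x ∈ B then false else η x) = τ')
            = Fib B τ' (s' - spinOn Bᶜ τ') := by
          ext η
          simp only [Fib, Finset.mem_filter, Finset.mem_univ, true_and]
          constructor
          · rintro ⟨hs, hr⟩
            have hoff : ∀ x, x ∉ B → η x = τ' x := by
              intro x hx
              have := congrFun hr x
              simpa [hx] using this
            refine ⟨hoff, ?_⟩
            have hC : spinOn Bᶜ η = spinOn Bᶜ τ' :=
              spinOn_congr (fun x hx => hoff x (Finset.mem_compl.mp hx))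
            have := spinOn_univ_split B η
            omega
          · rintro ⟨hoff, hspin⟩
            have hC : spinOn Bᶜ η = spinOn Bᶜ τ' :=
              spinOn_congr (fun x hx => hoff x (Finset.mem_compl.mp hx))
            constructor
            · have := spinOn_univ_split B η
              omega
            · funext x
              by_cases hx : x ∈ B
              · simp [hx, hτ'B x hx]
              · simp [hx, hoff x hx]
        rw [hset, hGdef]
        exact sum_Fib_eq B τ' (fun _ => false) _ φ hdep
      · rw [if_neg hτ']
        apply Finset.sum_eq_zero
        intro η hη
        exfalso
        apply hτ'
        rw [hT, Finset.mem_filter]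
        refine ⟨Finset.mem_univ _, ?_⟩
        rw [Finset.mem_filter] at hη
        intro x hx
        have := congrFun hη.2 x
        simpa [hx] using this
    calc ∑ τ' ∈ T, G (s' - spinOn Bᶜ τ')
        = ∑ τ' : L → Bool, if τ' ∈ T then G (s' - spinOn Bᶜ τ') else 0 :=
          ((Finset.sum_ite_mem Finset.univ T
            (fun τ' => G (s' - spinOn Bᶜ τ'))).trans (by rw [Finset.univ_inter])).symm
      _ = ∑ τ' : L → Bool,
            ∑ η ∈ (Finset.univ.filter (fun η => spinOn Finset.univ η = s')).filter
              (fun η => (fun x => if x ∈ B then false else η x) = τ'), φ η := by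
          apply Finset.sum_congr rfl; intro τ' _; rw [hinner]
      _ = 0 := hfib
  -- G vanishes above the max spin
  have hGempty : ∀ t : ℤ, (B.card : ℤ) < t → G t = 0 := by
    intro t ht
    apply Finset.sum_eq_zero
    intro η hη
    rw [Fib, Finset.mem_filter] at hη
    have := spinOn_le B η
    omega
  -- the special outside configuration which is all-true outside B
  set τs : L → Bool := fun x => decide (x ∉ B) with hτs
  have hτsT : τs ∈ T := by
    rw [hT, Finset.mem_filter]
    exact ⟨Finset.mem_univ _, fun x hx => by simp [hτs, hx]⟩
  have hspinτs : spinOn Bᶜ τs = (Bᶜ.card : ℤ) := by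
    rw [spinOn]
    have hall : ∀ x ∈ Bᶜ, (if τs x then (1 : ℤ) else -1) = 1 := by
      intro x hx
      simp [hτs, Finset.mem_compl.mp hx]
    rw [Finset.sum_congr rfl hall]
    simp
  -- downward strong induction
  have hG : ∀ k : ℕ, ∀ t : ℤ, ((B.card : ℤ) - t).toNat = k → G t = 0 := by
    intro k
    induction k using Nat.strong_induction_on with
    | _ k ih =>
      intro t hk
      by_cases ht : (B.card : ℤ) < t
      · exact hGempty t ht
      push_neg at ht
      have key := hA (t + (Bᶜ.card : ℤ))
      rw [← Finset.add_sum_erase T _ hτsT] at key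
      have hrest : ∀ τ' ∈ T.erase τs, G (t + (Bᶜ.card : ℤ) - spinOn Bᶜ τ') = 0 := by
        intro τ' hτ'
        have hτ'T := Finset.mem_of_mem_erase hτ'
        have hτ'ne := Finset.ne_of_mem_erase hτ'
        rw [hT, Finset.mem_filter] at hτ'T
        -- τ' must be false somewhere outside B
        have hx : ∃ x, x ∈ Bᶜ ∧ τ' x = false := by
          by_contra hcon
          push_neg at hcon
          apply hτ'ne
          funext x
          by_cases hxB : x ∈ B
          · rw [hτ'T.2 x hxB]; simp [hτs, hxB]
          · have h1 := hcon x (Finset.mem_compl.mpr hxB)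
            have h2 : τ' x = true := by
              cases h : τ' x
              · exact absurd h h1
              · rfl
            rw [h2]; simp [hτs, hxB]
        obtain ⟨x₀, hx₀, hx₀f⟩ := hx
        have hlt := spinOn_lt Bᶜ τ' hx₀ hx₀f
        set u := t + (Bᶜ.card : ℤ) - spinOn Bᶜ τ' with hu
        have hut : t < u := by omega
        by_cases hub : (B.card : ℤ) < u
        · exact hGempty u hub
        · push_neg at hub
          exact ih ((B.card : ℤ) - u).toNat (by omega) u rfl
      rw [Finset.sum_eq_zero hrest, add_zero] at key
      have : t + (Bᶜ.card : ℤ) - spinOn Bᶜ τs = t := by rw [hspinτs]; ring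
      rw [this] at key
      exact key
  exact hG ((B.card : ℤ) - t).toNat t rfl


lemma hoeff_sum {α : Type*} (S : Finset α) (φ : α → ℝ) (M lam : ℝ) (hM : 0 < M)
    (hb : ∀ x ∈ S, |φ x| ≤ M) (h0 : ∑ x ∈ S, φ x = 0) :
    ∑ x ∈ S, Real.exp (lam * φ x) ≤ S.card * Real.exp (lam ^ 2 * M ^ 2 / 2) := by
  have hpt : ∀ x ∈ S, Real.exp (lam * φ x) ≤
      Real.cosh (lam * M) + (φ x / M) * Real.sinh (lam * M) := by
    intro x hx
    set t := φ x / M with htdef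
    have ht : |t| ≤ 1 := by
      rw [htdef, abs_div, abs_of_pos hM, div_le_one hM]
      exact hb x hx
    rw [abs_le] at ht
    have ha : (0 : ℝ) ≤ (1 + t) / 2 := by linarith
    have hb' : (0 : ℝ) ≤ (1 - t) / 2 := by linarith
    have hab : (1 + t) / 2 + (1 - t) / 2 = 1 := by ring
    have hconv := convexOn_exp.2 (Set.mem_univ (lam * M)) (Set.mem_univ (-(lam * M)))
      ha hb' hab
    simp only [smul_eq_mul] at hconv
    have htM : t * M = φ x := by rw [htdef]; field_simp
    have harg : (1 + t) / 2 * (lam * M) + (1 - t) / 2 * (-(lam * M)) = lam * φ x := by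
      rw [← htM]; ring
    rw [harg] at hconv
    calc Real.exp (lam * φ x) ≤ (1 + t) / 2 * Real.exp (lam * M)
          + (1 - t) / 2 * Real.exp (-(lam * M)) := hconv
      _ = Real.cosh (lam * M) + t * Real.sinh (lam * M) := by
          rw [Real.cosh_eq, Real.sinh_eq]; ring
  calc ∑ x ∈ S, Real.exp (lam * φ x)
      ≤ ∑ x ∈ S, (Real.cosh (lam * M) + (φ x / M) * Real.sinh (lam * M)) :=
        Finset.sum_le_sum hpt
    _ = S.card * Real.cosh (lam * M) + (∑ x ∈ S, φ x) / M * Real.sinh (lam * M) := by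
        rw [Finset.sum_add_distrib, Finset.sum_const, nsmul_eq_mul]
        congr 1
        rw [← Finset.sum_mul, ← Finset.sum_div]
    _ = S.card * Real.cosh (lam * M) := by rw [h0]; simp
    _ ≤ S.card * Real.exp (lam ^ 2 * M ^ 2 / 2) := by
        refine mul_le_mul_of_nonneg_left ?_ (by positivity)
        have := Real.cosh_le_exp_half_sq (lam * M)
        calc Real.cosh (lam * M) ≤ Real.exp ((lam * M) ^ 2 / 2) := this
          _ = Real.exp (lam ^ 2 * M ^ 2 / 2) := by ring_nf

lemma mgf_bound (n : ℕ) (f : ℕ → (L → Bool) → ℝ) (I : ℕ → Finset L) (M : ℝ) (s : ℤ)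
    (hM : 0 < M)
    (hdisj : ∀ i j, i < n → j < n → i ≠ j → Disjoint (I i) (I j))
    (hdep : ∀ i, i < n → ∀ η η' : L → Bool, (∀ x ∈ I i, η x = η' x) → f i η = f i η')
    (hbd : ∀ i, i < n → ∀ η, |f i η| ≤ M)
    (hzero : ∀ i, i < n → ∀ s' : ℤ,
      ∑ η ∈ Finset.univ.filter (fun η => spinOn Finset.univ η = s'), f i η = 0)
    (A : Finset (L → Bool))
    (hA : A = Finset.univ.filter (fun η => spinOn Finset.univ η = s))
    (lam : ℝ) :
    ∀ k, k ≤ n → ∑ η ∈ A, Real.exp (lam * ∑ i ∈ Finset.range k, f i η)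
      ≤ A.card * Real.exp (k * (lam ^ 2 * M ^ 2 / 2)) := by
  intro k
  induction k with
  | zero => intro _; simp
  | succ k ih =>
    intro hk1
    have hk : k < n := hk1
    have ihk := ih (le_of_lt hk)
    set D : ℝ := lam ^ 2 * M ^ 2 / 2 with hD
    set B : Finset L := I k with hB
    set rC : (L → Bool) → (L → Bool) := fun η x => if x ∈ B then false else η x with hrC
    -- fiberwise bound
    have claim : ∀ τ : L → Bool,
        ∑ η ∈ A.filter (fun η => rC η = τ), Real.exp (lam * ∑ i ∈ Finset.range (k + 1), f i η)
          ≤ Real.exp D *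
            ∑ η ∈ A.filter (fun η => rC η = τ), Real.exp (lam * ∑ i ∈ Finset.range k, f i η) := by
      intro τ
      set E : Finset (L → Bool) := A.filter (fun η => rC η = τ) with hE
      rcases E.eq_empty_or_nonempty with hEe | ⟨η₀, hη₀⟩
      · rw [hEe]; simp
      have hmem : ∀ η ∈ E, η ∈ A ∧ rC η = τ := by
        intro η hη; rw [hE, Finset.mem_filter] at hη; exact hη
      have hτB : ∀ x ∈ B, τ x = false := by
        intro x hx
        have := congrFun (hmem η₀ hη₀).2 x
        simpa [hrC, hx] using this.symm
      have hoff : ∀ η ∈ E, ∀ x, x ∉ B → η x = τ x := by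
        intro η hη x hx
        have := congrFun (hmem η hη).2 x
        simpa [hrC, hx] using this
      -- the partial sum is constant on the fiber
      have hconst : ∀ η ∈ E, (∑ i ∈ Finset.range k, f i η) = ∑ i ∈ Finset.range k, f i η₀ := by
        intro η hη
        apply Finset.sum_congr rfl
        intro i hi
        have hik : i < k := Finset.mem_range.mp hi
        have hin : i < n := lt_trans hik hk
        apply hdep i hin
        intro x hxI
        have hxB : x ∉ B :=
          fun hxB => (Finset.disjoint_left.mp (hdisj i k hin hk (Nat.ne_of_lt hik))) hxI hxB
        rw [hoff η hη x hxB, ← hoff η₀ hη₀ x hxB]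
      -- identify the fiber
      have hEfib : E = Fib B τ (s - spinOn Bᶜ τ) := by
        ext η
        simp only [hE, Fib, Finset.mem_filter, Finset.mem_univ, true_and, hA]
        constructor
        · rintro ⟨hs, hr⟩
          have hoffη : ∀ x, x ∉ B → η x = τ x := by
            intro x hx
            have := congrFun hr x
            simpa [hrC, hx] using this
          refine ⟨hoffη, ?_⟩
          have hC : spinOn Bᶜ η = spinOn Bᶜ τ :=
            spinOn_congr (fun x hx => hoffη x (Finset.mem_compl.mp hx))
          have := spinOn_univ_split B η
          omega
        · rintro ⟨hoffη, hspin⟩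
          have hC : spinOn Bᶜ η = spinOn Bᶜ τ :=
            spinOn_congr (fun x hx => hoffη x (Finset.mem_compl.mp hx))
          constructor
          · have := spinOn_univ_split B η
            omega
          · funext x
            by_cases hx : x ∈ B
            · simp [hrC, hx, hτB x hx]
            · simp [hrC, hx, hoffη x hx]
      have hzero0 : ∑ η ∈ E, f k η = 0 := by
        rw [hEfib]
        exact condMean B (f k) (hdep k hk) (hzero k hk) _ τ
      set c : ℝ := ∑ i ∈ Finset.range k, f i η₀ with hc
      calc ∑ η ∈ E, Real.exp (lam * ∑ i ∈ Finset.range (k + 1), f i η)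
          = ∑ η ∈ E, Real.exp (lam * c) * Real.exp (lam * f k η) := by
            apply Finset.sum_congr rfl
            intro η hη
            rw [Finset.sum_range_succ, hconst η hη, mul_add, Real.exp_add]
        _ = Real.exp (lam * c) * ∑ η ∈ E, Real.exp (lam * f k η) :=
            (Finset.mul_sum _ _ _).symm
        _ ≤ Real.exp (lam * c) * (E.card * Real.exp D) := by
            refine mul_le_mul_of_nonneg_left ?_ (Real.exp_nonneg _)
            exact hoeff_sum E (f k) M lam hM (fun η _ => hbd k hk η) hzero0
        _ = Real.exp D * ∑ η ∈ E, Real.exp (lam * ∑ i ∈ Finset.range k, f i η) := by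
            have : ∑ η ∈ E, Real.exp (lam * ∑ i ∈ Finset.range k, f i η)
                = E.card * Real.exp (lam * c) := by
              rw [Finset.sum_congr rfl (fun η hη => by rw [hconst η hη])]
              simp [mul_comm]
            rw [this]; ring
    calc ∑ η ∈ A, Real.exp (lam * ∑ i ∈ Finset.range (k + 1), f i η)
        = ∑ τ : L → Bool, ∑ η ∈ A.filter (fun η => rC η = τ),
            Real.exp (lam * ∑ i ∈ Finset.range (k + 1), f i η) :=
          (Finset.sum_fiberwise A rC _).symm
      _ ≤ ∑ τ : L → Bool, Real.exp D * ∑ η ∈ A.filter (fun η => rC η = τ),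
            Real.exp (lam * ∑ i ∈ Finset.range k, f i η) :=
          Finset.sum_le_sum (fun τ _ => claim τ)
      _ = Real.exp D * ∑ η ∈ A, Real.exp (lam * ∑ i ∈ Finset.range k, f i η) := by
          rw [← Finset.mul_sum, Finset.sum_fiberwise A rC _]
      _ ≤ Real.exp D * (A.card * Real.exp (k * D)) := by
          refine mul_le_mul_of_nonneg_left ihk (Real.exp_nonneg _)
      _ = A.card * Real.exp ((k + 1 : ℕ) * D) := by
          push_cast
          rw [add_mul, one_mul, Real.exp_add]
          ring


end Stmt7Aux

open scoped ENNReal in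
/-- Azuma-type concentration for the canonical ensemble: there is a universal `c > 0` such
that, for functions `f i` (for `i < n`) with pairwise disjoint supports `I i`, bounded by
`M > 0`, and with zero mean on every level set of the total spin, the uniform measure on the
canonical ensemble `A = {η | ∑ η_x = s}` of the event
`|n⁻¹ ∑_{i<n} f i| ≥ K · M · n^{-1/2}` is at most `2 exp (-c K²)`. -/
theorem stmt_7 : ∃ c : ℝ, 0 < c ∧
    ∀ (L : Type) (_ : Fintype L) (_ : DecidableEq L)
      (n : ℕ) (f : ℕ → (L → Bool) → ℝ) (I : ℕ → Finset L) (M : ℝ) (s : ℤ),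
      0 < n → 0 < M →
      (∀ i j, i < n → j < n → i ≠ j → Disjoint (I i) (I j)) →
      (∀ i, i < n → ∀ η η' : L → Bool, (∀ x ∈ I i, η x = η' x) → f i η = f i η') →
      (∀ i, i < n → ∀ η, |f i η| ≤ M) →
      (∀ i, i < n → ∀ s' : ℤ,
        ∑ η ∈ Finset.univ.filter
            (fun η : L → Bool => (∑ x : L, (if η x then (1 : ℤ) else -1)) = s'), f i η = 0) →
      ∀ (A : Finset (L → Bool)),
        A = Finset.univ.filter
          (fun η : L → Bool => (∑ x : L, (if η x then (1 : ℤ) else -1)) = s) →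
        ∀ (hAne : A.Nonempty) (K : ℝ), 0 < K →
        (PMF.uniformOfFinset A hAne).toMeasure
            {η : L → Bool |
              K * M / Real.sqrt n ≤ |(n : ℝ)⁻¹ * ∑ i ∈ Finset.range n, f i η|} ≤
          ENNReal.ofReal (2 * Real.exp (-c * K ^ 2)) := by
  refine ⟨1/2, by norm_num, ?_⟩
  intro L _ _ n f I M s hn hM hdisj hdep hbd hzero A hA hAne K hK
  classical
  -- restate hypotheses in `spinOn` form
  have hzero' : ∀ i, i < n → ∀ s' : ℤ,
      ∑ η ∈ Finset.univ.filter (fun η => Stmt7Aux.spinOn Finset.univ η = s'), f i η = 0 := by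
    intro i hi s'
    have h := hzero i hi s'
    rw [← h]
    congr 1
  have hA' : A = Finset.univ.filter (fun η => Stmt7Aux.spinOn Finset.univ η = s) := by
    rw [hA]
    congr 1
  have hN : (0 : ℝ) < (n : ℝ) := Nat.cast_pos.mpr hn
  have hNne : (n : ℝ) ≠ 0 := ne_of_gt hN
  have hMne : M ≠ 0 := ne_of_gt hM
  have hsq : 0 < Real.sqrt n := Real.sqrt_pos.mpr hN
  have hss : Real.sqrt n * Real.sqrt n = (n : ℝ) := Real.mul_self_sqrt hN.le
  set lam : ℝ := K / (M * Real.sqrt n) with hlam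
  have hlampos : 0 < lam := by positivity
  set t₀ : ℝ := K * M * Real.sqrt n with ht₀
  have hlamt : lam * t₀ = K ^ 2 := by
    rw [hlam, ht₀]
    field_simp
  have hlam2 : (n : ℝ) * (lam ^ 2 * M ^ 2 / 2) = K ^ 2 / 2 := by
    rw [hlam]
    rw [div_pow, mul_pow]
    rw [Real.sq_sqrt hN.le]
    field_simp
  set S : (L → Bool) → ℝ := fun η => ∑ i ∈ Finset.range n, f i η with hS
  set Ep : Finset (L → Bool) := A.filter (fun η => t₀ ≤ S η) with hEp
  set Em : Finset (L → Bool) := A.filter (fun η => S η ≤ -t₀) with hEm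
  have hplus := Stmt7Aux.mgf_bound n f I M s hM hdisj hdep hbd hzero' A hA' lam n le_rfl
  have hminus := Stmt7Aux.mgf_bound n f I M s hM hdisj hdep hbd hzero' A hA' (-lam) n le_rfl
  -- Chernoff bound for the upper tail
  have chernoff : ∀ (E : Finset (L → Bool)) (sg : ℝ),
      E ⊆ A → (∀ η ∈ E, K ^ 2 ≤ sg * S η) →
      (∑ η ∈ A, Real.exp (sg * S η) ≤ A.card * Real.exp ((n : ℝ) * (lam ^ 2 * M ^ 2 / 2))) →
      (E.card : ℝ) ≤ A.card * Real.exp (-(K ^ 2 / 2)) := by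
    intro E sg hEA hlb hmgf
    have h1 : (E.card : ℝ) * Real.exp (K ^ 2) ≤ A.card * Real.exp (K ^ 2 / 2) := by
      calc (E.card : ℝ) * Real.exp (K ^ 2) = ∑ _η ∈ E, Real.exp (K ^ 2) := by
            rw [Finset.sum_const, nsmul_eq_mul]
        _ ≤ ∑ η ∈ E, Real.exp (sg * S η) :=
            Finset.sum_le_sum (fun η hη => Real.exp_le_exp.mpr (hlb η hη))
        _ ≤ ∑ η ∈ A, Real.exp (sg * S η) :=
            Finset.sum_le_sum_of_subset_of_nonneg hEA (fun _ _ _ => Real.exp_nonneg _)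
        _ ≤ A.card * Real.exp ((n : ℝ) * (lam ^ 2 * M ^ 2 / 2)) := hmgf
        _ = A.card * Real.exp (K ^ 2 / 2) := by rw [hlam2]
    have h2 : (E.card : ℝ) ≤ A.card * Real.exp (K ^ 2 / 2) / Real.exp (K ^ 2) :=
      (le_div_iff₀ (Real.exp_pos _)).mpr h1
    calc (E.card : ℝ) ≤ A.card * Real.exp (K ^ 2 / 2) / Real.exp (K ^ 2) := h2
      _ = A.card * Real.exp (-(K ^ 2 / 2)) := by
          rw [mul_div_assoc, ← Real.exp_sub]
          congr 2
          ring
  have hEpcard : (Ep.card : ℝ) ≤ A.card * Real.exp (-(K ^ 2 / 2)) := by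
    refine chernoff Ep lam (Finset.filter_subset _ _) ?_ (by simpa [hlam2] using hplus)
    intro η hη
    have hη' : t₀ ≤ S η := (Finset.mem_filter.mp hη).2
    calc K ^ 2 = lam * t₀ := hlamt.symm
      _ ≤ lam * S η := mul_le_mul_of_nonneg_left hη' hlampos.le
  have hEmcard : (Em.card : ℝ) ≤ A.card * Real.exp (-(K ^ 2 / 2)) := by
    refine chernoff Em (-lam) (Finset.filter_subset _ _) ?_ (by simpa [hlam2] using hminus)
    intro η hη
    have hη' : S η ≤ -t₀ := (Finset.mem_filter.mp hη).2
    calc K ^ 2 = lam * t₀ := hlamt.symm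
      _ ≤ lam * (-S η) := mul_le_mul_of_nonneg_left (by linarith) hlampos.le
      _ = -lam * S η := by ring
  -- the event
  set Ev : Set (L → Bool) :=
    {η : L → Bool | K * M / Real.sqrt n ≤ |(n : ℝ)⁻¹ * ∑ i ∈ Finset.range n, f i η|} with hEv
  have hmeas : MeasurableSet Ev := (Set.to_countable Ev).measurableSet
  rw [PMF.toMeasure_uniformOfFinset_apply hAne Ev hmeas]
  -- the event is contained in the union of the two tails
  have hsub : A.filter (· ∈ Ev) ⊆ Ep ∪ Em := by
    intro η hη
    rw [Finset.mem_filter] at hη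
    obtain ⟨hηA, hηEv⟩ := hη
    have hev : K * M / Real.sqrt n ≤ |(n : ℝ)⁻¹ * S η| := hηEv
    have habs : t₀ ≤ |S η| := by
      rw [abs_mul, abs_of_pos (inv_pos.mpr hN)] at hev
      have h3 := mul_le_mul_of_nonneg_left hev hN.le
      have h4 : (n : ℝ) * ((n : ℝ)⁻¹ * |S η|) = |S η| := by field_simp
      have h5 : (n : ℝ) * (K * M / Real.sqrt n) = t₀ := by
        rw [ht₀]
        field_simp
        linear_combination (-1) * hss
      rw [h4, h5] at h3
      exact h3
    rcases le_abs.mp habs with h | h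
    · exact Finset.mem_union_left _ (Finset.mem_filter.mpr ⟨hηA, h⟩)
    · exact Finset.mem_union_right _ (Finset.mem_filter.mpr ⟨hηA, by linarith⟩)
  have hcard : ((A.filter (· ∈ Ev)).card : ℝ)
      ≤ (2 * Real.exp (-(1/2) * K ^ 2)) * (A.card : ℝ) := by
    have h6 : (A.filter (· ∈ Ev)).card ≤ Ep.card + Em.card :=
      le_trans (Finset.card_le_card hsub) (Finset.card_union_le _ _)
    have h7 : ((A.filter (· ∈ Ev)).card : ℝ) ≤ (Ep.card : ℝ) + Em.card := by
      exact_mod_cast h6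
    have h8 : -(1/2 : ℝ) * K ^ 2 = -(K ^ 2 / 2) := by ring
    rw [h8]
    linarith
  -- ENNReal conversion
  have hA0 : (A.card : ℝ≥0∞) ≠ 0 := by
    simp only [ne_eq, Nat.cast_eq_zero]
    exact Finset.card_ne_zero_of_mem hAne.choose_spec
  have hAtop : (A.card : ℝ≥0∞) ≠ ⊤ := ENNReal.natCast_ne_top _
  rw [ENNReal.div_le_iff_le_mul (Or.inl hA0) (Or.inl hAtop)]
  have hR0 : (0 : ℝ) ≤ 2 * Real.exp (-(1/2) * K ^ 2) := by positivity
  calc ((A.filter (· ∈ Ev)).card : ℝ≥0∞)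
      = ENNReal.ofReal ((A.filter (· ∈ Ev)).card : ℝ) :=
        (ENNReal.ofReal_natCast _).symm
    _ ≤ ENNReal.ofReal ((2 * Real.exp (-(1/2) * K ^ 2)) * (A.card : ℝ)) := by
        exact ENNReal.ofReal_le_ofReal hcard
    _ = ENNReal.ofReal (2 * Real.exp (-(1/2) * K ^ 2)) * (A.card : ℝ≥0∞) := by
        rw [ENNReal.ofReal_mul hR0, ENNReal.ofReal_natCast]
end

section
/- Let G be the generator of an ergodic continuous-time Markov chain on a finite state space Ω with invariant probability measure μ whose symmetric part has spectral gap λ₀ > 0. Then for every mean-zero function 𝔣 and every λ ≥ 0, the resolvent satisfies the sup-norm bound ‖(λ − G)^{−1}𝔣‖_∞ ≤ C·(1 + λ₀⁻¹)·(1 + log(1/μ_min))·‖𝔣‖_∞ for a universal constant C, where μ_min = min_{ω∈Ω} μ(ω). In particular the bound is uniform in λ ≥ 0. -/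
open Finset Real

private lemma stmt10_aux_id (lam a v w : ℝ) (ha : 0 < a) (hla : 0 < lam + a) :
    a / (lam + a) * (v + (lam * v - w) / a) + (lam + a)⁻¹ * w = v := by
  field_simp
  ring

private lemma stmt10_aux_cancel (a b l : ℝ) (ha : a ≠ 0) (hb : b ≠ 0) :
    a / b * (b / a * l) = l := by
  field_simp

private lemma stmt10_aux_div (cc g l : ℝ) (hc : cc ≠ 0) (hg : g ≠ 0) :
    (cc / g * l + 1) / cc = l / g + 1 / cc := by
  field_simp

set_option maxHeartbeats 1600000 in
/-- Sup-norm resolvent bound: there is a universal constant `C` such that for every ergodic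
Markov generator `G` on a finite state space with invariant probability `μ` (with
`μ_min = min μ > 0`) whose symmetric part has spectral gap `gap₀ > 0` in `L²(μ)` on mean-zero
functions, every mean-zero `f`, every `λ ≥ 0` and `u = (λ - G)⁻¹ f` mean-zero (i.e.
`λ u - G u = f` with `∫ u dμ = 0`), one has
`‖u‖_∞ ≤ C (1 + gap₀⁻¹)(1 + log (1/μ_min)) ‖f‖_∞`, uniformly in `λ ≥ 0`. -/
theorem stmt_10 : ∃ C : ℝ, 0 < C ∧
    ∀ (Ω : Type) (_ : Fintype Ω) (_ : Nonempty Ω) (μ : Ω → ℝ) (G : Ω → Ω → ℝ)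
      (gap₀ lam : ℝ) (f u : Ω → ℝ),
      (∀ x, 0 < μ x) → (∑ x, μ x = 1) →
      (∀ x y, x ≠ y → 0 ≤ G x y) →
      (∀ x, ∑ y, G x y = 0) →
      (∀ y, ∑ x, μ x * G x y = 0) →
      0 < gap₀ →
      (∀ b : Ω → ℝ, ∑ x, μ x * b x = 0 →
        gap₀ * ∑ x, μ x * b x ^ 2 ≤ -∑ x, μ x * b x * ∑ y, G x y * b y) →
      (∑ x, μ x * f x = 0) →
      0 ≤ lam →
      (∑ x, μ x * u x = 0) →
      (∀ x, lam * u x - (∑ y, G x y * u y) = f x) →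
      (⨆ x, |u x|) ≤
        C * (1 + gap₀⁻¹) * (1 + Real.log (⨅ x, μ x)⁻¹) * ⨆ x, |f x| := by
  refine ⟨2, by norm_num, ?_⟩
  intro Ω _ _ μ G gap₀ lam f u hμ hμ1 hGoff hGrow hGinv hgap hDir hf0 hlam hu0 heq
  classical
  set F := ⨆ x, |f x| with hFdef
  set m := ⨅ x, μ x with hmdef
  have hFbd : ∀ x, |f x| ≤ F :=
    fun x => le_ciSup (f := fun x => |f x|) (Set.Finite.bddAbove (Set.finite_range _)) x
  have hF0 : 0 ≤ F := le_trans (abs_nonneg _) (hFbd (Classical.arbitrary Ω))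
  have hm_le : ∀ x, m ≤ μ x :=
    fun x => ciInf_le (f := μ) (Set.Finite.bddBelow (Set.finite_range _)) x
  have hm0 : 0 < m := by
    obtain ⟨x, hx⟩ := exists_eq_ciInf_of_finite (f := μ)
    rw [hmdef, ← hx]; exact hμ x
  have hm1 : m ≤ 1 := by
    have hx := Classical.arbitrary Ω
    have : μ hx ≤ ∑ x, μ x := single_le_sum (fun i _ => (hμ i).le) (mem_univ hx)
    calc m ≤ μ hx := hm_le hx
      _ ≤ 1 := by rw [← hμ1]; exact this
  set L := Real.log m⁻¹ with hLdef
  have hL0 : 0 ≤ L := Real.log_nonneg (one_le_inv_iff₀.mpr ⟨hm0, hm1⟩)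
  -- diagonal of G is nonpositive
  have hGdiag : ∀ x, G x x ≤ 0 := by
    intro x
    have h := hGrow x
    rw [← Finset.add_sum_erase _ _ (mem_univ x)] at h
    have : 0 ≤ ∑ y ∈ univ.erase x, G x y :=
      sum_nonneg fun y hy => hGoff x y (Ne.symm (Finset.ne_of_mem_erase hy))
    linarith
  set cm := univ.sup' univ_nonempty (fun x => -G x x) with hcmdef
  have hcm : ∀ x, -G x x ≤ cm := fun x => Finset.le_sup' (fun z => -G z z) (mem_univ x)
  have hcm0 : 0 ≤ cm := by
    have x := Classical.arbitrary Ω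
    have := hcm x
    have := hGdiag x
    linarith
  set c := max gap₀ (max cm (4 * cm ^ 2 / gap₀)) with hcdef
  have hcg : gap₀ ≤ c := le_max_left _ _
  have hc0 : 0 < c := lt_of_lt_of_le hgap hcg
  have hccm : cm ≤ c := le_trans (le_max_left _ _) (le_max_right _ _)
  have hcq : 4 * cm ^ 2 ≤ gap₀ * c := by
    have h := le_trans (le_max_right cm (4 * cm ^ 2 / gap₀)) (le_max_right gap₀ _)
    rw [div_le_iff₀ hgap] at h
    calc 4 * cm ^ 2 ≤ c * gap₀ := h
      _ = gap₀ * c := mul_comm _ _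
  -- matrices
  set Gm : Matrix Ω Ω ℝ := Matrix.of G with hGmdef
  set M : Matrix Ω Ω ℝ := Matrix.of (fun x y => (if x = y then (1:ℝ) else 0) + G x y / c)
    with hMdef
  have hGmv : ∀ (v : Ω → ℝ) (x : Ω), Gm.mulVec v x = ∑ y, G x y * v y := fun v x => rfl
  have hMv : ∀ (v : Ω → ℝ) (x : Ω), M.mulVec v x = v x + (∑ y, G x y * v y) / c := by
    intro v x
    show ∑ y, ((if x = y then (1:ℝ) else 0) + G x y / c) * v y = _
    have h1 : ∀ y, ((if x = y then (1:ℝ) else 0) + G x y / c) * v y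
        = (if x = y then v y else 0) + (G x y * v y) / c := by
      intro y; by_cases h : x = y <;> simp [h] <;> ring
    rw [Finset.sum_congr rfl fun y _ => h1 y, Finset.sum_add_distrib,
      Finset.sum_ite_eq univ x (fun y => v y), ← Finset.sum_div]
    simp
  have hMnn : ∀ x y, 0 ≤ M x y := by
    intro x y
    have hrfl : M x y = (if x = y then (1:ℝ) else 0) + G x y / c := rfl
    rw [hrfl]
    by_cases h : x = y
    · rw [if_pos h]
      have h1 : -c ≤ G x y := by have h2 := hcm x; rw [← h]; linarith [hccm]
      have h2 : -1 ≤ G x y / c := by rw [le_div_iff₀ hc0]; linarith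
      linarith
    · rw [if_neg h]
      have := hGoff x y h
      positivity
  have hMrow : ∀ x, ∑ y, M x y = 1 := by
    intro x
    show ∑ y, ((if x = y then (1:ℝ) else 0) + G x y / c) = 1
    rw [Finset.sum_add_distrib, Finset.sum_ite_eq univ x (fun _ => (1:ℝ)),
      ← Finset.sum_div, hGrow x]
    simp
  -- sup-norm contraction
  have hinf1 : ∀ (v : Ω → ℝ) (K : ℝ), (∀ y, |v y| ≤ K) → ∀ x, |M.mulVec v x| ≤ K := by
    intro v K hv x
    have hK0 : 0 ≤ K := le_trans (abs_nonneg _) (hv x)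
    calc |M.mulVec v x| = |∑ y, M x y * v y| := rfl
      _ ≤ ∑ y, |M x y * v y| := abs_sum_le_sum_abs _ _
      _ ≤ ∑ y, M x y * K := by
          refine sum_le_sum fun y _ => ?_
          rw [abs_mul, abs_of_nonneg (hMnn x y)]
          exact mul_le_mul_of_nonneg_left (hv y) (hMnn x y)
      _ = K := by rw [← Finset.sum_mul, hMrow, one_mul]
  have hMninf : ∀ (n : ℕ) (x : Ω), |(M ^ n).mulVec f x| ≤ F := by
    intro n
    induction n with
    | zero => intro x; rw [pow_zero, Matrix.one_mulVec]; exact hFbd x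
    | succ n ih =>
        intro x
        rw [pow_succ', ← Matrix.mulVec_mulVec]
        exact hinf1 _ F ih x
  -- L² machinery
  set E : (Ω → ℝ) → ℝ := fun b => ∑ x, μ x * b x ^ 2 with hEdef
  have hE0 : ∀ b, 0 ≤ E b :=
    fun b => sum_nonneg fun x _ => mul_nonneg (hμ x).le (sq_nonneg _)
  have hCS : ∀ (a b : Ω → ℝ), (∀ y, 0 ≤ a y) →
      (∑ y, a y * b y) ^ 2 ≤ (∑ y, a y) * (∑ y, a y * b y ^ 2) := by
    intro a b ha
    have h := sum_mul_sq_le_sq_mul_sq univ (fun y => Real.sqrt (a y))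
      (fun y => Real.sqrt (a y) * b y)
    have e1 : ∀ y : Ω, Real.sqrt (a y) * (Real.sqrt (a y) * b y) = a y * b y := by
      intro y; rw [← mul_assoc, Real.mul_self_sqrt (ha y)]
    have e2 : ∀ y : Ω, Real.sqrt (a y) ^ 2 = a y := fun y => Real.sq_sqrt (ha y)
    have e3 : ∀ y : Ω, (Real.sqrt (a y) * b y) ^ 2 = a y * b y ^ 2 := by
      intro y; rw [mul_pow, e2]
    rw [Finset.sum_congr rfl fun y _ => e1 y, Finset.sum_congr rfl fun y _ => e2 y,
      Finset.sum_congr rfl fun y _ => e3 y] at h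
    exact h
  have habsrow : ∀ x, ∑ y, |G x y| = -2 * G x x := by
    intro x
    have h := hGrow x
    rw [← Finset.add_sum_erase _ _ (mem_univ x)] at h
    rw [← Finset.add_sum_erase _ (fun y => |G x y|) (mem_univ x)]
    have h1 : ∑ y ∈ univ.erase x, |G x y| = ∑ y ∈ univ.erase x, G x y :=
      Finset.sum_congr rfl fun y hy =>
        abs_of_nonneg (hGoff x y (Ne.symm (Finset.ne_of_mem_erase hy)))
    rw [h1, abs_of_nonpos (hGdiag x)]
    linarith
  have habscol : ∀ y, ∑ x, μ x * |G x y| = -2 * (μ y * G y y) := by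
    intro y
    have h := hGinv y
    rw [← Finset.add_sum_erase _ _ (mem_univ y)] at h
    rw [← Finset.add_sum_erase _ (fun x => μ x * |G x y|) (mem_univ y)]
    have h1 : ∑ x ∈ univ.erase y, μ x * |G x y| = ∑ x ∈ univ.erase y, μ x * G x y :=
      Finset.sum_congr rfl fun x hx => by
        rw [abs_of_nonneg (hGoff x y (Finset.ne_of_mem_erase hx))]
    rw [h1, abs_of_nonpos (hGdiag y)]
    linarith
  have hGopbound : ∀ b : Ω → ℝ, E (Gm.mulVec b) ≤ 4 * cm ^ 2 * E b := by
    intro b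
    have hx : ∀ x : Ω, (∑ y, G x y * b y) ^ 2 ≤ (2 * cm) * ∑ y, |G x y| * b y ^ 2 := by
      intro x
      have habs : |∑ y, G x y * b y| ≤ ∑ y, |G x y| * |b y| :=
        (abs_sum_le_sum_abs _ _).trans (le_of_eq (Finset.sum_congr rfl fun y _ => abs_mul _ _))
      have h1 : (∑ y, G x y * b y) ^ 2 ≤ (∑ y, |G x y| * |b y|) ^ 2 := by
        rw [← sq_abs]
        exact pow_le_pow_left₀ (abs_nonneg _) habs 2
      have h2 := hCS (fun y => |G x y|) (fun y => |b y|) (fun y => abs_nonneg _)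
      have h3 : ∑ y, |G x y| * |b y| ^ 2 = ∑ y, |G x y| * b y ^ 2 :=
        Finset.sum_congr rfl fun y _ => by rw [sq_abs]
      rw [h3, habsrow x] at h2
      have h4 : -2 * G x x ≤ 2 * cm := by have := hcm x; linarith
      have h5 : 0 ≤ ∑ y, |G x y| * b y ^ 2 :=
        sum_nonneg fun y _ => mul_nonneg (abs_nonneg _) (sq_nonneg _)
      nlinarith [h1, h2]
    calc E (Gm.mulVec b) = ∑ x, μ x * (∑ y, G x y * b y) ^ 2 := rfl
      _ ≤ ∑ x, μ x * ((2 * cm) * ∑ y, |G x y| * b y ^ 2) := by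
          exact sum_le_sum fun x _ => mul_le_mul_of_nonneg_left (hx x) (hμ x).le
      _ = (2 * cm) * ∑ y, (∑ x, μ x * |G x y|) * b y ^ 2 := by
          simp only [Finset.mul_sum, Finset.sum_mul]
          rw [Finset.sum_comm]
          exact Finset.sum_congr rfl fun x _ => Finset.sum_congr rfl fun y _ => by ring
      _ ≤ (2 * cm) * ∑ y, (2 * (μ y * cm)) * b y ^ 2 := by
          refine mul_le_mul_of_nonneg_left (sum_le_sum fun y _ => ?_) (by linarith)
          refine mul_le_mul_of_nonneg_right ?_ (sq_nonneg _)
          rw [habscol y]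
          have h6 := hcm y
          have h7 := (hμ y).le
          nlinarith
      _ = 4 * cm ^ 2 * E b := by
          rw [hEdef, Finset.mul_sum, Finset.mul_sum]
          refine Finset.sum_congr rfl fun y _ => by ring
  -- mean-zero preservation
  have hswap : ∀ b : Ω → ℝ, ∑ x, μ x * ∑ y, G x y * b y = 0 := by
    intro b
    have h1 : ∀ x : Ω, μ x * ∑ y, G x y * b y = ∑ y, μ x * G x y * b y := by
      intro x; rw [Finset.mul_sum]; exact Finset.sum_congr rfl fun y _ => by ring
    rw [Finset.sum_congr rfl fun x _ => h1 x, Finset.sum_comm]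
    have h2 : ∀ y : Ω, ∑ x, μ x * G x y * b y = (∑ x, μ x * G x y) * b y := by
      intro y; rw [Finset.sum_mul]
    rw [Finset.sum_congr rfl fun y _ => h2 y]
    simp [hGinv]
  have hMmean : ∀ b : Ω → ℝ, (∑ x, μ x * b x) = 0 → ∑ x, μ x * M.mulVec b x = 0 := by
    intro b hb
    have h1 : ∀ x : Ω, μ x * M.mulVec b x
        = μ x * b x + (μ x * ∑ y, G x y * b y) / c := by
      intro x; rw [hMv]; ring
    rw [Finset.sum_congr rfl fun x _ => h1 x, Finset.sum_add_distrib, hb,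
      ← Finset.sum_div, hswap b]
    simp
  -- one-step L² contraction
  have hL2step : ∀ b : Ω → ℝ, (∑ x, μ x * b x) = 0 →
      E (M.mulVec b) ≤ (1 - gap₀ / c) * E b := by
    intro b hb
    have hexp : E (M.mulVec b)
        = E b + (2 / c) * (∑ x, μ x * b x * Gm.mulVec b x)
          + (1 / c ^ 2) * E (Gm.mulVec b) := by
      have h1 : ∀ x : Ω, μ x * (M.mulVec b x) ^ 2
          = μ x * b x ^ 2 + (2 / c) * (μ x * b x * Gm.mulVec b x)
            + (1 / c ^ 2) * (μ x * (Gm.mulVec b x) ^ 2) := by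
        intro x
        rw [hMv, hGmv]
        field_simp
        ring
      show (∑ x, μ x * (M.mulVec b x) ^ 2) = _
      rw [Finset.sum_congr rfl fun x _ => h1 x, Finset.sum_add_distrib,
        Finset.sum_add_distrib, ← Finset.mul_sum, ← Finset.mul_sum]
    have hdir' : (∑ x, μ x * b x * Gm.mulVec b x) ≤ -(gap₀ * E b) := by
      have h := hDir b hb
      have h2 : (∑ x, μ x * b x * Gm.mulVec b x) = ∑ x, μ x * b x * ∑ y, G x y * b y :=
        Finset.sum_congr rfl fun x _ => by rw [hGmv]
      rw [h2]; linarith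
    have hop : E (Gm.mulVec b) ≤ gap₀ * c * E b := by
      have h := hGopbound b
      have h2 : 4 * cm ^ 2 * E b ≤ gap₀ * c * E b :=
        mul_le_mul_of_nonneg_right hcq (hE0 b)
      linarith
    have h3 : (2 / c) * (∑ x, μ x * b x * Gm.mulVec b x) ≤ (2 / c) * (-(gap₀ * E b)) :=
      mul_le_mul_of_nonneg_left hdir' (by positivity)
    have h4 : (1 / c ^ 2) * E (Gm.mulVec b) ≤ (1 / c ^ 2) * (gap₀ * c * E b) :=
      mul_le_mul_of_nonneg_left hop (by positivity)
    have h5 : E b + (2 / c) * (-(gap₀ * E b)) + (1 / c ^ 2) * (gap₀ * c * E b)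
        = (1 - gap₀ / c) * E b := by
      field_simp
      ring
    linarith
  set r := 1 - gap₀ / c with hrdef
  have hr0 : 0 ≤ r := by
    have : gap₀ / c ≤ 1 := (div_le_one hc0).mpr hcg
    simp only [hrdef]; linarith
  have hdecay : ∀ n : ℕ, (∑ x, μ x * (M ^ n).mulVec u x = 0)
      ∧ E ((M ^ n).mulVec u) ≤ r ^ n * E u := by
    intro n
    induction n with
    | zero => 
        rw [pow_zero, Matrix.one_mulVec, pow_zero, one_mul]
        exact ⟨hu0, le_refl _⟩
    | succ n ih =>
        obtain ⟨h0, hE⟩ := ih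
        rw [pow_succ', ← Matrix.mulVec_mulVec]
        constructor
        · exact hMmean _ h0
        · calc E (M.mulVec ((M ^ n).mulVec u)) ≤ r * E ((M ^ n).mulVec u) := hL2step _ h0
            _ ≤ r * (r ^ n * E u) := mul_le_mul_of_nonneg_left hE hr0
            _ = r ^ (n + 1) * E u := by rw [pow_succ']; ring
  -- L² bound on u
  have hEu : E u ≤ (F / gap₀) ^ 2 := by
    have hGu : ∀ x, (∑ y, G x y * u y) = lam * u x - f x := by
      intro x; have := heq x; linarith
    have h1 : gap₀ * E u ≤ -∑ x, μ x * u x * (lam * u x - f x) := by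
      have h := hDir u hu0
      have hc2 : (∑ x, μ x * u x * ∑ y, G x y * u y)
          = ∑ x, μ x * u x * (lam * u x - f x) :=
        Finset.sum_congr rfl fun x _ => by rw [hGu x]
      rw [hc2] at h
      exact h
    have h2 : -∑ x, μ x * u x * (lam * u x - f x)
        = -(lam * E u) + ∑ x, μ x * u x * f x := by
      have e : (∑ x, μ x * u x * (lam * u x - f x))
          = lam * E u - ∑ x, μ x * u x * f x := by
        have e1 : ∀ x : Ω, μ x * u x * (lam * u x - f x)
            = lam * (μ x * u x ^ 2) - μ x * u x * f x := fun x => by ring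
        rw [Finset.sum_congr rfl fun x _ => e1 x, Finset.sum_sub_distrib, ← Finset.mul_sum]
      rw [e]; ring
    have h3 : (∑ x, μ x * u x * f x) ≤ F * ∑ x, μ x * |u x| := by
      rw [Finset.mul_sum]
      refine Finset.sum_le_sum fun x _ => ?_
      have : u x * f x ≤ |u x| * F := by
        calc u x * f x ≤ |u x * f x| := le_abs_self _
          _ = |u x| * |f x| := abs_mul _ _
          _ ≤ |u x| * F := mul_le_mul_of_nonneg_left (hFbd x) (abs_nonneg _)
      calc μ x * u x * f x = μ x * (u x * f x) := by ring
        _ ≤ μ x * (|u x| * F) := mul_le_mul_of_nonneg_left this (hμ x).le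
        _ = F * (μ x * |u x|) := by ring
    have h4 : (∑ x, μ x * |u x|) ≤ Real.sqrt (E u) := by
      have h5 := hCS μ (fun x => |u x|) (fun x => (hμ x).le)
      rw [hμ1, one_mul] at h5
      have h6 : (∑ x, μ x * |u x| ^ 2) = E u :=
        Finset.sum_congr rfl fun x _ => by rw [sq_abs]
      rw [h6] at h5
      exact (Real.le_sqrt (Finset.sum_nonneg fun x _ =>
        mul_nonneg (hμ x).le (abs_nonneg _)) (hE0 u)).mpr h5
    have h7 : gap₀ * E u ≤ F * Real.sqrt (E u) := by
      have := mul_le_mul_of_nonneg_left h4 hF0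
      have hlamE : 0 ≤ lam * E u := mul_nonneg hlam (hE0 u)
      linarith
    have hs := Real.sq_sqrt (hE0 u)
    have hsn := Real.sqrt_nonneg (E u)
    rcases eq_or_lt_of_le hsn with hz | hz
    · rw [← hs, ← hz]; norm_num; positivity
    · have h8 : gap₀ * Real.sqrt (E u) ≤ F := by
        refine (mul_le_mul_iff_of_pos_right hz).mp ?_
        nlinarith [hs, h7]
      have h9 : Real.sqrt (E u) ≤ F / gap₀ := by
        rw [le_div_iff₀ hgap]; linarith
      calc E u = Real.sqrt (E u) ^ 2 := hs.symm
        _ ≤ (F / gap₀) ^ 2 := pow_le_pow_left₀ hsn h9 2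
  -- sup vs L²
  have hsupL2 : ∀ (v : Ω → ℝ) (x : Ω), |v x| ≤ Real.sqrt (E v) / Real.sqrt m := by
    intro v x
    have h1 : m * v x ^ 2 ≤ E v := by
      calc m * v x ^ 2 ≤ μ x * v x ^ 2 :=
            mul_le_mul_of_nonneg_right (hm_le x) (sq_nonneg _)
        _ ≤ E v := Finset.single_le_sum
            (fun i (_ : i ∈ univ) => mul_nonneg (hμ i).le (sq_nonneg (v i))) (mem_univ x)
    have h2 : v x ^ 2 ≤ E v / m := (le_div_iff₀ hm0).mpr (by linarith [h1])
    calc |v x| = Real.sqrt (v x ^ 2) := (Real.sqrt_sq_eq_abs _).symm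
      _ ≤ Real.sqrt (E v / m) := Real.sqrt_le_sqrt h2
      _ = Real.sqrt (E v) / Real.sqrt m := Real.sqrt_div (hE0 v) m
  -- the one-step resolvent identity
  have hlc0 : 0 < lam + c := by linarith
  set θ := c / (lam + c) with hθdef
  have hθ0 : 0 ≤ θ := by positivity
  have hθ1 : θ ≤ 1 := by rw [hθdef, div_le_one hlc0]; linarith
  have hstep : u = θ • M.mulVec u + (lam + c)⁻¹ • f := by
    funext x
    have hGu : (∑ y, G x y * u y) = lam * u x - f x := by
      have := heq x; linarith
    show u x = θ * M.mulVec u x + (lam + c)⁻¹ * f x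
    rw [hMv, hGu, hθdef]
    exact (stmt10_aux_id lam c (u x) (f x) hc0 hlc0).symm
  have hiter : ∀ N : ℕ, u = θ ^ N • (M ^ N).mulVec u
      + (lam + c)⁻¹ • ∑ n ∈ Finset.range N, θ ^ n • (M ^ n).mulVec f := by
    intro N
    induction N with
    | zero => simp [Matrix.one_mulVec]
    | succ N ih =>
        have hMN : (M ^ N).mulVec u
            = θ • (M ^ (N + 1)).mulVec u + (lam + c)⁻¹ • (M ^ N).mulVec f := by
          calc (M ^ N).mulVec u
              = (M ^ N).mulVec (θ • M.mulVec u + (lam + c)⁻¹ • f) := by rw [← hstep]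
            _ = θ • (M ^ N).mulVec (M.mulVec u) + (lam + c)⁻¹ • (M ^ N).mulVec f := by
                rw [Matrix.mulVec_add, Matrix.mulVec_smul, Matrix.mulVec_smul]
            _ = θ • (M ^ (N + 1)).mulVec u + (lam + c)⁻¹ • (M ^ N).mulVec f := by
                rw [Matrix.mulVec_mulVec, ← pow_succ]
        calc u = θ ^ N • (M ^ N).mulVec u
              + (lam + c)⁻¹ • ∑ n ∈ Finset.range N, θ ^ n • (M ^ n).mulVec f := ih
          _ = θ ^ N • (θ • (M ^ (N + 1)).mulVec u + (lam + c)⁻¹ • (M ^ N).mulVec f)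
              + (lam + c)⁻¹ • ∑ n ∈ Finset.range N, θ ^ n • (M ^ n).mulVec f := by
                rw [← hMN]
          _ = θ ^ (N + 1) • (M ^ (N + 1)).mulVec u
              + (lam + c)⁻¹ • ∑ n ∈ Finset.range (N + 1), θ ^ n • (M ^ n).mulVec f := by
                funext x
                simp only [Finset.sum_range_succ, Pi.add_apply, Pi.smul_apply,
                  smul_eq_mul, Finset.sum_apply, pow_succ]
                ring
  -- choice of N
  clear_value F m L cm c Gm M E r θ
  set N := ⌈(c / gap₀) * L⌉₊ with hNdef
  have hNnn : 0 ≤ (c / gap₀) * L := mul_nonneg (div_nonneg hc0.le hgap.le) hL0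
  have hNlb : (c / gap₀) * L ≤ (N : ℝ) := Nat.le_ceil _
  have hNub : (N : ℝ) ≤ (c / gap₀) * L + 1 := (Nat.ceil_lt_add_one hNnn).le
  have hexpm : Real.exp (-((N : ℝ) * (gap₀ / c))) ≤ m := by
    have h1 : L ≤ (N : ℝ) * (gap₀ / c) := by
      have h2 := mul_le_mul_of_nonneg_left hNlb (le_of_lt (div_pos hgap hc0))
      have h3 : gap₀ / c * (c / gap₀ * L) = L :=
        stmt10_aux_cancel gap₀ c L hgap.ne' hc0.ne'
      rw [h3] at h2
      linarith [h2]
    calc Real.exp (-((N : ℝ) * (gap₀ / c))) ≤ Real.exp (-L) :=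
          Real.exp_le_exp.mpr (by linarith)
      _ = m := by
          rw [hLdef, Real.log_inv]
          simp [Real.exp_log hm0]
  -- bound on the remainder term
  have hMNu : ∀ x, |(M ^ N).mulVec u x| ≤ F / gap₀ := by
    intro x
    have hr_exp : r ≤ Real.exp (-(gap₀ / c)) := by
      have := Real.add_one_le_exp (-(gap₀ / c))
      rw [hrdef]; linarith
    have h1 : r ^ N ≤ Real.exp (-((N : ℝ) * (gap₀ / c))) := by
      calc r ^ N ≤ Real.exp (-(gap₀ / c)) ^ N := pow_le_pow_left₀ hr0 hr_exp N
        _ = Real.exp ((N : ℝ) * -(gap₀ / c)) := (Real.exp_nat_mul _ N).symm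
        _ = Real.exp (-((N : ℝ) * (gap₀ / c))) := by ring_nf
    have h2 : E ((M ^ N).mulVec u) ≤ m * E u := by
      calc E ((M ^ N).mulVec u) ≤ r ^ N * E u := (hdecay N).2
        _ ≤ Real.exp (-((N : ℝ) * (gap₀ / c))) * E u :=
            mul_le_mul_of_nonneg_right h1 (hE0 u)
        _ ≤ m * E u := mul_le_mul_of_nonneg_right hexpm (hE0 u)
    calc |(M ^ N).mulVec u x| ≤ Real.sqrt (E ((M ^ N).mulVec u)) / Real.sqrt m :=
          hsupL2 _ x
      _ ≤ Real.sqrt (m * E u) / Real.sqrt m :=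
          (div_le_div_iff_of_pos_right (Real.sqrt_pos.mpr hm0)).mpr (Real.sqrt_le_sqrt h2)
      _ = Real.sqrt (E u) := by
          rw [Real.sqrt_mul hm0.le]
          exact mul_div_cancel_left₀ _ (Real.sqrt_pos.mpr hm0).ne'
      _ ≤ Real.sqrt ((F / gap₀) ^ 2) := Real.sqrt_le_sqrt hEu
      _ = F / gap₀ := Real.sqrt_sq (by positivity)
  -- main pointwise bound
  have hmain : ∀ x, |u x| ≤ (2 / gap₀ + L / gap₀) * F := by
    intro x
    have hux : u x = θ ^ N * (M ^ N).mulVec u x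
        + (lam + c)⁻¹ * ∑ n ∈ Finset.range N, θ ^ n * (M ^ n).mulVec f x := by
      have := congrFun (hiter N) x
      simpa [Finset.sum_apply] using this
    have hb1 : |θ ^ N * (M ^ N).mulVec u x| ≤ F / gap₀ := by
      rw [abs_mul]
      have hθN : |θ ^ N| ≤ 1 := by
        rw [abs_of_nonneg (pow_nonneg hθ0 N)]
        exact pow_le_one₀ hθ0 hθ1
      calc |θ ^ N| * |(M ^ N).mulVec u x| ≤ 1 * (F / gap₀) :=
            mul_le_mul hθN (hMNu x) (abs_nonneg _) zero_le_one
        _ = F / gap₀ := one_mul _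
    have hb2 : |(lam + c)⁻¹ * ∑ n ∈ Finset.range N, θ ^ n * (M ^ n).mulVec f x|
        ≤ (N : ℝ) / c * F := by
      rw [abs_mul, abs_of_nonneg (by positivity : (0:ℝ) ≤ (lam + c)⁻¹)]
      have h1 : |∑ n ∈ Finset.range N, θ ^ n * (M ^ n).mulVec f x| ≤ (N : ℝ) * F := by
        calc |∑ n ∈ Finset.range N, θ ^ n * (M ^ n).mulVec f x|
            ≤ ∑ n ∈ Finset.range N, |θ ^ n * (M ^ n).mulVec f x| :=
              abs_sum_le_sum_abs _ _
          _ ≤ ∑ _n ∈ Finset.range N, F := by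
              refine Finset.sum_le_sum fun n _ => ?_
              rw [abs_mul, abs_of_nonneg (pow_nonneg hθ0 n)]
              calc θ ^ n * |(M ^ n).mulVec f x| ≤ 1 * F :=
                    mul_le_mul (pow_le_one₀ hθ0 hθ1) (hMninf n x) (abs_nonneg _) zero_le_one
                _ = F := one_mul _
          _ = (N : ℝ) * F := by rw [Finset.sum_const, Finset.card_range, nsmul_eq_mul]
      calc (lam + c)⁻¹ * |∑ n ∈ Finset.range N, θ ^ n * (M ^ n).mulVec f x|
          ≤ (lam + c)⁻¹ * ((N : ℝ) * F) := by
            exact mul_le_mul_of_nonneg_left h1 (by positivity)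
        _ ≤ c⁻¹ * ((N : ℝ) * F) := by
            refine mul_le_mul_of_nonneg_right ?_ (by positivity)
            exact inv_anti₀ hc0 (by linarith)
        _ = (N : ℝ) / c * F := by ring
    have hNc : (N : ℝ) / c ≤ L / gap₀ + 1 / gap₀ := by
      have h1 : (N : ℝ) / c ≤ ((c / gap₀) * L + 1) / c :=
        (div_le_div_iff_of_pos_right hc0).mpr hNub
      have h2 : ((c / gap₀) * L + 1) / c = L / gap₀ + 1 / c :=
        stmt10_aux_div c gap₀ L hc0.ne' hgap.ne'
      have h3 : 1 / c ≤ 1 / gap₀ := by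
        apply one_div_le_one_div_of_le hgap hcg
      rw [h2] at h1
      linarith
    calc |u x| ≤ |θ ^ N * (M ^ N).mulVec u x|
          + |(lam + c)⁻¹ * ∑ n ∈ Finset.range N, θ ^ n * (M ^ n).mulVec f x| := by
          rw [hux]; exact abs_add_le _ _
      _ ≤ F / gap₀ + (N : ℝ) / c * F := add_le_add hb1 hb2
      _ ≤ F / gap₀ + (L / gap₀ + 1 / gap₀) * F :=
          add_le_add_right (mul_le_mul_of_nonneg_right hNc hF0) _
      _ = (2 / gap₀ + L / gap₀) * F := by ring
  -- conclude
  refine ciSup_le fun x => ?_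
  have h := hmain x
  have hfinal : (2 / gap₀ + L / gap₀) * F ≤ 2 * (1 + gap₀⁻¹) * (1 + L) * F := by
    refine mul_le_mul_of_nonneg_right ?_ hF0
    have hg : 0 < gap₀⁻¹ := by positivity
    have e1 : 2 / gap₀ = 2 * gap₀⁻¹ := by ring
    have e2 : L / gap₀ = L * gap₀⁻¹ := by ring
    rw [e1, e2]
    nlinarith [mul_nonneg hL0 hg.le]
  calc |u x| ≤ (2 / gap₀ + L / gap₀) * F := h
    _ ≤ 2 * (1 + gap₀⁻¹) * (1 + L) * F := hfinal
end
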